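/- Let f : 𝔹ⁿ → 𝔹ⁿ be holomorphic, holomorphic at p ∈ ∂𝔹ⁿ, with f(p) = p. If all eigenvalues of the Jacobian matrix J_f(p) have modulus strictly less than one, then there exists k₀ ∈ ℕ such that the sequence of iterates {f^{k k₀}}_{k∈ℕ} converges locally uniformly on 𝔹ⁿ to the constant map p. -/

import Mathlib

open Metric Set Filter

noncomputable section

open Complex Topology

section Aux

lemma moebius_normSq_identity (b z : ℂ) :
    ‖1 - (starRingEnd ℂ) b * z‖^2 - ‖b - z‖^2 = (1 - ‖b‖^2)*(1-‖z‖^2) := by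
  have h1 : ∀ w : ℂ, ‖w‖^2 = Complex.normSq w := fun w => by
    rw [Complex.sq_norm]
  rw [h1, h1, h1, h1]
  simp only [Complex.normSq_apply, Complex.sub_re, Complex.sub_im, Complex.mul_re,
    Complex.mul_im, Complex.one_re, Complex.one_im, Complex.conj_re, Complex.conj_im]
  ring

lemma moebius_den_ne_zero {b z : ℂ} (hb : ‖b‖ < 1) (hz : ‖z‖ < 1) :
    (1 - (starRingEnd ℂ) b * z) ≠ 0 := by
  intro h
  have h2 : ‖(starRingEnd ℂ) b * z‖ < 1 := by
    rw [norm_mul, RCLike.norm_conj]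
    nlinarith [norm_nonneg b, norm_nonneg z]
  have : (1:ℂ) = (starRingEnd ℂ) b * z := by linear_combination h
  rw [← this] at h2; simp at h2

lemma moebius_mapsTo {b : ℂ} (hb : ‖b‖ < 1) :
    MapsTo (fun z => (b - z) / (1 - (starRingEnd ℂ) b * z)) (ball (0:ℂ) 1) (ball (0:ℂ) 1) := by
  intro z hz
  rw [mem_ball_zero_iff] at hz ⊢
  have hden0 := moebius_den_ne_zero hb hz
  have hpos : 0 < ‖1 - (starRingEnd ℂ) b * z‖ := norm_pos_iff.2 hden0
  rw [norm_div, div_lt_one hpos]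
  have key := moebius_normSq_identity b z
  have h1 : (0:ℝ) < 1 - ‖b‖^2 := by nlinarith [norm_nonneg b]
  have h2 : (0:ℝ) < 1 - ‖z‖^2 := by nlinarith [norm_nonneg z]
  nlinarith [norm_nonneg (b - z), norm_nonneg (1 - (starRingEnd ℂ) b * z),
    mul_pos h1 h2]

lemma moebius_differentiableOn {b : ℂ} (hb : ‖b‖ < 1) :
    DifferentiableOn ℂ (fun z => (b - z) / (1 - (starRingEnd ℂ) b * z)) (ball (0:ℂ) 1) := by
  apply DifferentiableOn.div
  · exact (differentiable_const b).differentiableOn.sub differentiable_id.differentiableOn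
  · exact (differentiable_const (1:ℂ)).differentiableOn.sub
      ((differentiable_const _).mul differentiable_id).differentiableOn
  · intro z hz
    exact moebius_den_ne_zero hb (mem_ball_zero_iff.1 hz)

/-- Schwarz–Pick at the origin: if `Q : 𝔻 → 𝔻` is holomorphic and `‖a‖ < 1`, then
`‖Q a - Q 0‖ ≤ ‖a‖ * ‖1 - conj (Q 0) * Q a‖`. -/
lemma schwarz_pick_zero {Q : ℂ → ℂ} (hQ : DifferentiableOn ℂ Q (ball 0 1))
    (hQm : MapsTo Q (ball (0:ℂ) 1) (ball (0:ℂ) 1)) {a : ℂ} (ha : ‖a‖ < 1) :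
    ‖Q 0 - Q a‖ ≤ ‖a‖ * ‖1 - (starRingEnd ℂ) (Q 0) * Q a‖ := by
  have h0 : (0:ℂ) ∈ ball (0:ℂ) 1 := by simp
  have hQ0 : ‖Q 0‖ < 1 := mem_ball_zero_iff.1 (hQm h0)
  set M : ℂ → ℂ := fun z => (Q 0 - z) / (1 - (starRingEnd ℂ) (Q 0) * z) with hM
  have hψd : DifferentiableOn ℂ (M ∘ Q) (ball 0 1) :=
    (moebius_differentiableOn hQ0).comp hQ hQm
  have hψm : MapsTo (M ∘ Q) (ball (0:ℂ) 1) (ball (0:ℂ) 1) :=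
    (moebius_mapsTo hQ0).comp hQm
  have hψ0 : (M ∘ Q) 0 = 0 := by
    simp only [Function.comp, hM, sub_self, zero_div]
  have := Complex.norm_le_norm_of_mapsTo_ball hψd (hψm.mono_right ball_subset_closedBall) hψ0 ha
  have hQa : ‖Q a‖ < 1 := mem_ball_zero_iff.1 (hQm (mem_ball_zero_iff.2 ha))
  have hden : ‖1 - (starRingEnd ℂ) (Q 0) * Q a‖ > 0 :=
    norm_pos_iff.2 (moebius_den_ne_zero hQ0 hQa)
  simp only [Function.comp, hM, norm_div] at this
  calc ‖Q 0 - Q a‖ = ‖Q 0 - Q a‖ / ‖1 - (starRingEnd ℂ) (Q 0) * Q a‖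
        * ‖1 - (starRingEnd ℂ) (Q 0) * Q a‖ := by
        rw [div_mul_cancel₀ _ (ne_of_gt hden)]
    _ ≤ ‖a‖ * ‖1 - (starRingEnd ℂ) (Q 0) * Q a‖ := by
        apply mul_le_mul_of_nonneg_right this (le_of_lt hden)

variable {E : Type*} [NormedAddCommGroup E] [NormedSpace ℂ E]

/-- One Schwarz–Pick step along a disc slice of the unit ball. -/
lemma slice_step {q : E → ℂ} (hq : DifferentiableOn ℂ q (ball 0 1))
    (hqm : MapsTo q (ball (0:E) 1) (ball (0:ℂ) 1)) {r : ℝ} (hr : r < 1)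
    {z w : E} (hz : ‖z‖ ≤ r) (hw : ‖w‖ ≤ r) (hzw : ‖z - w‖ ≤ (1 - r) / 4) :
    ‖q w - q z‖ ≤ (1/2) * ‖1 - (starRingEnd ℂ) (q w) * q z‖ := by
  have hr0 : 0 ≤ r := le_trans (norm_nonneg z) hz
  rcases eq_or_ne z w with rfl | hne
  · simp
  have hd : 0 < ‖z - w‖ := norm_pos_iff.2 (sub_ne_zero.2 hne)
  set d : ℝ := ‖z - w‖ with hdd
  set R : ℝ := (1 - r) / 2 with hRR
  have hR : 0 < R := by simp only [hRR]; linarith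
  set ψ : ℂ → E := fun lam => w + (lam * ((R / d : ℝ) : ℂ)) • (z - w) with hψ
  have hψd : Differentiable ℂ ψ := by
    apply (differentiable_const w).add
    exact (differentiable_id.mul_const _).smul_const (z - w)
  have hψm : MapsTo ψ (ball (0:ℂ) 1) (ball (0:E) 1) := by
    intro lam hlam
    rw [mem_ball_zero_iff] at hlam ⊢
    have : ‖ψ lam‖ ≤ ‖w‖ + ‖lam‖ * (R / d) * ‖z - w‖ := by
      refine (norm_add_le _ _).trans ?_
      rw [norm_smul, norm_mul]
      have : ‖((R / d : ℝ) : ℂ)‖ = R / d := by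
        rw [Complex.norm_real, Real.norm_eq_abs, abs_of_pos (div_pos hR hd)]
      rw [this, mul_assoc]
    have h2 : R / d * ‖z - w‖ = R := by rw [← hdd]; field_simp
    rw [mul_assoc, h2] at this
    have : ‖ψ lam‖ ≤ r + ‖lam‖ * R := by linarith [mul_le_mul_of_nonneg_right hlam.le (le_of_lt hR)]
    nlinarith [hlam, hR]
  have hψ0 : ψ 0 = w := by simp [hψ]
  set lam₁ : ℂ := ((d / R : ℝ) : ℂ) with hlam₁
  have hlam₁n : ‖lam₁‖ = d / R := by
    rw [hlam₁, Complex.norm_real, Real.norm_eq_abs, abs_of_pos (div_pos hd hR)]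
  have hlam₁lt : ‖lam₁‖ ≤ 1/2 := by
    rw [hlam₁n, div_le_iff₀ hR]
    simp only [hRR]
    linarith
  have hψ1 : ψ lam₁ = z := by
    have : (lam₁ * ((R / d : ℝ) : ℂ)) = 1 := by
      rw [hlam₁, ← Complex.ofReal_mul]
      norm_cast
      field_simp
    rw [hψ]
    simp only [this, one_smul]
    abel
  have hQd : DifferentiableOn ℂ (q ∘ ψ) (ball 0 1) :=
    hq.comp hψd.differentiableOn hψm
  have hQm : MapsTo (q ∘ ψ) (ball (0:ℂ) 1) (ball (0:ℂ) 1) := hqm.comp hψm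
  have key := schwarz_pick_zero hQd hQm (a := lam₁) (by linarith : ‖lam₁‖ < 1)
  simp only [Function.comp, hψ0, hψ1] at key
  calc ‖q w - q z‖ ≤ ‖lam₁‖ * ‖1 - (starRingEnd ℂ) (q w) * q z‖ := key
    _ ≤ (1/2) * ‖1 - (starRingEnd ℂ) (q w) * q z‖ :=
        mul_le_mul_of_nonneg_right hlam₁lt (norm_nonneg _)

lemma harnack_step {a b : ℂ} (ha : ‖a‖ ≤ 1)
    (hab : ‖b - a‖ ≤ (1/2) * ‖1 - (starRingEnd ℂ) b * a‖) :
    ‖1 + a‖ ≤ 3 * ‖1 + b‖ := by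
  have h1 : ‖1 - (starRingEnd ℂ) b * a‖ ≤ ‖1 + a‖ + ‖1 + b‖ := by
    have : (1 : ℂ) - (starRingEnd ℂ) b * a = (1 + a) - (1 + (starRingEnd ℂ) b) * a := by ring
    rw [this]
    refine (norm_sub_le _ _).trans ?_
    have h2 : ‖(1 + (starRingEnd ℂ) b) * a‖ ≤ ‖1 + b‖ := by
      rw [norm_mul]
      have : ‖(1:ℂ) + (starRingEnd ℂ) b‖ = ‖1 + b‖ := by
        rw [show (1:ℂ) + (starRingEnd ℂ) b = (starRingEnd ℂ) (1 + b) by simp, RCLike.norm_conj]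
      rw [this]
      nlinarith [norm_nonneg ((1:ℂ) + b)]
    linarith
  have h3 : ‖1 + a‖ ≤ ‖1 + b‖ + ‖b - a‖ := by
    have : (1 : ℂ) + a = (1 + b) - (b - a) := by ring
    rw [this]; exact norm_sub_le _ _
  linarith

/-- Harnack chain along segments in the ball. -/
lemma harnack_chain {q : E → ℂ} (hq : DifferentiableOn ℂ q (ball 0 1))
    (hqm : MapsTo q (ball (0:E) 1) (ball (0:ℂ) 1)) {r : ℝ} (hr : r < 1) :
    ∀ N : ℕ, ∀ z w : E, ‖z‖ ≤ r → ‖w‖ ≤ r → ‖z - w‖ ≤ N * ((1 - r) / 4) →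
      ‖1 + q z‖ ≤ 3 ^ N * ‖1 + q w‖ := by
  intro N
  induction N with
  | zero =>
    intro z w hz hw hzw
    simp only [Nat.cast_zero, zero_mul] at hzw
    have : z = w := by
      have : ‖z - w‖ = 0 := le_antisymm hzw (norm_nonneg _)
      rwa [norm_sub_eq_zero_iff] at this
    subst this; simp
  | succ N ih =>
    intro z w hz hw hzw
    have hr0 : 0 ≤ r := le_trans (norm_nonneg z) hz
    set dd : ℝ := (1 - r) / 4 with hdd
    have hdpos : 0 < dd := by simp only [hdd]; linarith
    by_cases hcase : ‖z - w‖ ≤ N * dd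
    · have := ih z w hz hw hcase
      have h39 : (3:ℝ) ^ N ≤ 3 ^ (N+1) := by
        apply pow_le_pow_right₀ (by norm_num) (Nat.le_succ N)
      nlinarith [norm_nonneg ((1:ℂ) + q w)]
    · push_neg at hcase
      have hpos : 0 < ‖z - w‖ := lt_of_le_of_lt (by positivity) hcase
      set s : ℝ := (N * dd) / ‖z - w‖ with hs
      have hs0 : 0 ≤ s := by positivity
      have hs1 : s ≤ 1 := by
        rw [hs, div_le_one hpos]; exact hcase.le
      set w' : E := w + (s : ℂ) • (z - w) with hw'
      have hw'w : ‖w' - w‖ = N * dd := by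
        rw [hw']
        simp only [add_sub_cancel_left]
        rw [norm_smul, Complex.norm_real, Real.norm_eq_abs, _root_.abs_of_nonneg hs0, hs]
        field_simp
      have hzw' : ‖z - w'‖ ≤ dd := by
        have : z - w' = ((1 - s : ℝ) : ℂ) • (z - w) := by
          rw [hw']
          push_cast
          rw [sub_smul, one_smul]
          abel
        rw [this, norm_smul, Complex.norm_real, Real.norm_eq_abs, _root_.abs_of_nonneg (by linarith)]
        rw [hs]
        have : (1 - N * dd / ‖z - w‖) * ‖z - w‖ = ‖z - w‖ - N * dd := by field_simp
        rw [this]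
        have : ‖z - w‖ ≤ (N + 1) * dd := by push_cast at hzw ⊢; linarith
        linarith
      have hw'r : ‖w'‖ ≤ r := by
        have : w' = ((1 - s : ℝ) : ℂ) • w + (s : ℂ) • z := by
          rw [hw']
          push_cast
          rw [sub_smul, one_smul, smul_sub]
          abel
        rw [this]
        refine (norm_add_le _ _).trans ?_
        rw [norm_smul, norm_smul, Complex.norm_real, Complex.norm_real,
          Real.norm_eq_abs, Real.norm_eq_abs, _root_.abs_of_nonneg (by linarith), _root_.abs_of_nonneg hs0]
        nlinarith [norm_nonneg w, norm_nonneg z]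
      have ihw' := ih w' w hw'r hw hw'w.le
      have hstep := slice_step hq hqm hr hz hw'r hzw'
      have hqz1 : ‖q z‖ ≤ 1 := by
        have : z ∈ ball (0:E) 1 := mem_ball_zero_iff.2 (lt_of_le_of_lt hz hr)
        exact (mem_ball_zero_iff.1 (hqm this)).le
      have hha := harnack_step hqz1 hstep
      calc ‖1 + q z‖ ≤ 3 * ‖1 + q w'‖ := hha
        _ ≤ 3 * (3 ^ N * ‖1 + q w‖) := by linarith
        _ = 3 ^ (N + 1) * ‖1 + q w‖ := by ring


lemma exists_pow_norm_lt_one (hn : 1 ≤ n) (A : EuclideanSpace ℂ (Fin n) →L[ℂ] EuclideanSpace ℂ (Fin n))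
    (heig : ∀ μ : ℂ, Module.End.HasEigenvalue
      ((A : EuclideanSpace ℂ (Fin n) →L[ℂ] EuclideanSpace ℂ (Fin n)) :
        EuclideanSpace ℂ (Fin n) →ₗ[ℂ] EuclideanSpace ℂ (Fin n)) μ → ‖μ‖ < 1) :
    ∃ m : ℕ, 1 ≤ m ∧ ‖A ^ m‖ < 1 := by
  haveI : Nontrivial (EuclideanSpace ℂ (Fin n)) := by
    refine ⟨EuclideanSpace.single ⟨0, hn⟩ (1:ℂ), 0, ?_⟩
    intro h
    have := congrArg (fun v => v ⟨0, hn⟩) h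
    simp [EuclideanSpace.single] at this
  -- every spectral point is an eigenvalue
  have hspec : ∀ μ ∈ spectrum ℂ A, ‖μ‖₊ < 1 := by
    intro μ hμ
    rw [spectrum.mem_iff] at hμ
    rw [← NNReal.coe_lt_coe, coe_nnnorm]
    apply heig
    -- `algebraMap ℂ _ μ - A` is not a unit, hence not bijective, hence not injective
    have hnb : ¬ Function.Bijective (algebraMap ℂ (EuclideanSpace ℂ (Fin n) →L[ℂ] EuclideanSpace ℂ (Fin n)) μ - A) := by
      intro hb
      exact hμ (ContinuousLinearMap.isUnit_iff_bijective.2 hb)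
    have hni : ¬ Function.Injective ((algebraMap ℂ (EuclideanSpace ℂ (Fin n) →L[ℂ] EuclideanSpace ℂ (Fin n)) μ - A) :
        EuclideanSpace ℂ (Fin n) → EuclideanSpace ℂ (Fin n)) := by
      intro hi
      apply hnb
      refine ⟨hi, ?_⟩
      have := (LinearMap.injective_iff_surjective
        (f := ((algebraMap ℂ (EuclideanSpace ℂ (Fin n) →L[ℂ] EuclideanSpace ℂ (Fin n)) μ - A) :
          EuclideanSpace ℂ (Fin n) →ₗ[ℂ] EuclideanSpace ℂ (Fin n)))).1 hi
      exact this
    rw [Function.not_injective_iff] at hni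
    obtain ⟨x, y, hxy, hne⟩ := hni
    have hx : A (x - y) = μ • (x - y) := by
      have : (algebraMap ℂ _ μ - A) x = (algebraMap ℂ _ μ - A) y := hxy
      simp only [ContinuousLinearMap.sub_apply, ContinuousLinearMap.algebraMap_apply] at this
      have h2 : μ • x - A x = μ • y - A y := this
      have h3 : A x - A y = μ • x - μ • y := (sub_eq_sub_iff_sub_eq_sub.mp h2).symm
      rw [map_sub, smul_sub]
      exact h3
    refine Module.End.hasEigenvalue_of_hasEigenvector (x := x - y) ⟨?_, sub_ne_zero.2 hne⟩
    rw [Module.End.mem_eigenspace_iff]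
    exact hx
  have hrad : spectralRadius ℂ A < 1 := by
    have := spectrum.spectralRadius_lt_of_forall_lt (a := A) (r := 1) (fun z hz => hspec z hz)
    simpa using this
  have hgel := spectrum.pow_nnnorm_pow_one_div_tendsto_nhds_spectralRadius (A)
  have hev : ∀ᶠ m : ℕ in atTop, (‖A ^ m‖₊ : ENNReal) ^ (1 / (m:ℝ)) < 1 :=
    hgel.eventually_lt_const hrad
  obtain ⟨m, hm1, hmlt⟩ := (hev.and (eventually_ge_atTop 1)).exists
  refine ⟨m, hmlt, ?_⟩
  have hmpos : (0:ℝ) < 1 / (m:ℝ) := by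
    have : (0:ℝ) < (m:ℝ) := by exact_mod_cast hmlt
    positivity
  have : (‖A ^ m‖₊ : ENNReal) < 1 := by
    by_contra hle
    push_neg at hle
    have := ENNReal.rpow_le_rpow hle (le_of_lt hmpos)
    rw [ENNReal.one_rpow] at this
    exact absurd (lt_of_le_of_lt this hm1) (lt_irrefl _)
  exact_mod_cast this

lemma two_sub_norm_sq (h : ℂ) : ‖2 - h‖^2 = 4 - 4*h.re + ‖h‖^2 := by
  have h1 : ∀ w : ℂ, ‖w‖^2 = Complex.normSq w := fun w => by
    rw [Complex.sq_norm]
  rw [h1, h1]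
  simp only [Complex.normSq_apply, Complex.sub_re, Complex.sub_im]
  norm_num
  ring

variable {E : Type*} [NormedAddCommGroup E] [InnerProductSpace ℂ E]

lemma qprop {F : E → E} (hFd : DifferentiableOn ℂ F (ball 0 1))
    (hFm : MapsTo F (ball (0:E) 1) (ball (0:E) 1)) {p : E} (hp : ‖p‖ = 1) :
    DifferentiableOn ℂ (fun z => -((innerSL ℂ p) (F z)) / (2 - (innerSL ℂ p) (F z))) (ball 0 1) ∧
    MapsTo (fun z => -((innerSL ℂ p) (F z)) / (2 - (innerSL ℂ p) (F z))) (ball (0:E) 1) (ball (0:ℂ) 1) ∧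
    ∀ z ∈ ball (0:E) 1,
      ‖1 - (innerSL ℂ p) (F z)‖ ≤ (3/2) * ‖1 + -((innerSL ℂ p) (F z)) / (2 - (innerSL ℂ p) (F z))‖ ∧
      ‖1 + -((innerSL ℂ p) (F z)) / (2 - (innerSL ℂ p) (F z))‖ ≤ 2 * ‖1 - (innerSL ℂ p) (F z)‖ := by
  set h : E → ℂ := fun z => (innerSL ℂ p) (F z) with hh
  have hlt : ∀ z ∈ ball (0:E) 1, ‖h z‖ < 1 := by
    intro z hz
    have hFz : ‖F z‖ < 1 := mem_ball_zero_iff.1 (hFm hz)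
    calc ‖h z‖ ≤ ‖p‖ * ‖F z‖ := norm_inner_le_norm _ _
      _ < 1 := by rw [hp, one_mul]; exact hFz
  have hden : ∀ z ∈ ball (0:E) 1, (2 - h z) ≠ 0 := by
    intro z hz h0
    have := hlt z hz
    have : ‖(2:ℂ) - h z‖ = 0 := by rw [h0]; simp
    have h2 : ‖(2:ℂ)‖ - ‖h z‖ ≤ ‖(2:ℂ) - h z‖ := norm_sub_norm_le _ _
    rw [Complex.norm_ofNat] at h2
    linarith [hlt z hz]
  have hdiffh : DifferentiableOn ℂ h (ball 0 1) :=
    ((innerSL ℂ p).differentiable.comp_differentiableOn hFd)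
  refine ⟨?_, ?_, ?_⟩
  · intro z hz
    have hd2 : DifferentiableWithinAt ℂ
        (fun z => -(h z) * ((2:ℂ) - h z)⁻¹) (ball 0 1) z :=
      ((hdiffh z hz).neg.mul (((differentiableWithinAt_const (2:ℂ)).sub (hdiffh z hz)).inv
        (hden z hz)))
    simpa [div_eq_mul_inv, hh] using hd2
  · intro z hz
    rw [mem_ball_zero_iff]
    have h1 := hlt z hz
    have h2 : 0 < ‖2 - h z‖ := norm_pos_iff.2 (hden z hz)
    rw [norm_div, div_lt_one h2, norm_neg]
    have key := two_sub_norm_sq (h z)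
    have hre : (h z).re ≤ ‖h z‖ := by
      exact Complex.re_le_norm _
    nlinarith [norm_nonneg (h z), norm_nonneg ((2:ℂ) - h z)]
  · intro z hz
    have h1 := hlt z hz
    have hdz := hden z hz
    have h2 : 0 < ‖2 - h z‖ := norm_pos_iff.2 hdz
    have heq : 1 + -(h z) / (2 - h z) = 2*(1 - h z) / (2 - h z) := by
      rw [eq_div_iff hdz]
      field_simp
      ring
    have hnorm : ‖1 + -(h z) / (2 - h z)‖ = 2 * ‖1 - h z‖ / ‖2 - h z‖ := by
      rw [heq, norm_div, norm_mul, Complex.norm_ofNat]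
    have hub : ‖(2:ℂ) - h z‖ ≤ 3 := by
      calc ‖(2:ℂ) - h z‖ ≤ ‖(2:ℂ)‖ + ‖h z‖ := norm_sub_le _ _
        _ ≤ 3 := by rw [Complex.norm_ofNat]; linarith
    have hlb : 1 ≤ ‖(2:ℂ) - h z‖ := by
      have := norm_sub_norm_le (2:ℂ) (h z)
      rw [Complex.norm_ofNat] at this
      linarith
    constructor
    · rw [hnorm]
      have h3 : (3:ℝ)/2 * (2 * ‖1 - h z‖ / ‖2 - h z‖) = 3 * ‖1 - h z‖ / ‖2 - h z‖ := by ring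
      rw [h3, le_div_iff₀ h2]
      nlinarith [norm_nonneg ((1:ℂ) - h z)]
    · rw [hnorm]
      rw [div_le_iff₀ h2]
      nlinarith [norm_nonneg ((1:ℂ) - h z)]


lemma iter_diffOn {E : Type*} [NormedAddCommGroup E] [InnerProductSpace ℂ E] {f : E → E}
    (hf : DifferentiableOn ℂ f (ball 0 1))
    (hfself : MapsTo f (ball (0:E) 1) (ball 0 1)) :
    ∀ j : ℕ, DifferentiableOn ℂ (f^[j]) (ball 0 1) := by
  intro j
  induction j with
  | zero => simpa using differentiableOn_id
  | succ j ih =>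
    rw [Function.iterate_succ']
    exact hf.comp ih (hfself.iterate j)

variable {E : Type*} [NormedAddCommGroup E] [InnerProductSpace ℂ E]

lemma exists_attracted_point
    (f g : E → E) (U : Set E) (hUopen : IsOpen U)
    (hfself : MapsTo f (ball 0 1) (ball 0 1))
    {p : E} (hp : ‖p‖ = 1) (hpU : p ∈ U)
    (hg : DifferentiableOn ℂ g U) (hfg : EqOn f g (ball 0 1 ∩ U))
    (hgp : g p = p) (m : ℕ) (hm : ‖(fderiv ℂ g p) ^ m‖ < 1) :
    ∃ w₀ : E, w₀ ∈ ball (0:E) 1 ∧ Tendsto (fun k => f^[k*m] w₀) atTop (𝓝 p) := by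
  have hgat : DifferentiableAt ℂ g p := hg.differentiableAt (hUopen.mem_nhds hpU)
  have hGder : HasFDerivAt g^[m] ((fderiv ℂ g p) ^ m) p := hgat.hasFDerivAt.iterate hgp m
  have hGp : g^[m] p = p := Function.iterate_fixed hgp m
  set c : ℝ := (1 + ‖(fderiv ℂ g p) ^ m‖) / 2 with hc
  have hc1 : c < 1 := by rw [hc]; linarith
  have hc0 : 0 ≤ c := by rw [hc]; positivity
  have hεpos : (0:ℝ) < (1 - ‖(fderiv ℂ g p) ^ m‖) / 2 := by linarith
  -- contraction estimate near p
  have hev : ∀ᶠ z in 𝓝 p, ‖g^[m] z - p‖ ≤ c * ‖z - p‖ := by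
    have hlo := hGder.isLittleO.bound hεpos
    filter_upwards [hlo] with z hz
    rw [hGp] at hz
    have h1 := norm_add_le (g^[m] z - p - ((fderiv ℂ g p) ^ m) (z - p))
      (((fderiv ℂ g p) ^ m) (z - p))
    rw [sub_add_cancel] at h1
    have h2 : ‖((fderiv ℂ g p) ^ m) (z - p)‖ ≤ ‖(fderiv ℂ g p) ^ m‖ * ‖z - p‖ :=
      ContinuousLinearMap.le_opNorm _ _
    calc ‖g^[m] z - p‖ ≤ (1 - ‖(fderiv ℂ g p) ^ m‖)/2 * ‖z - p‖
        + ‖(fderiv ℂ g p) ^ m‖ * ‖z - p‖ := by linarith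
      _ = c * ‖z - p‖ := by rw [hc]; ring
  obtain ⟨δ₂, hδ₂pos, hδ₂⟩ := Metric.eventually_nhds_iff.1 hev
  -- orbit up to time m stays in U
  have hcont : ∀ j : ℕ, ContinuousAt g^[j] p := by
    intro j
    induction j with
    | zero => exact continuousAt_id
    | succ j ih =>
      rw [Function.iterate_succ']
      have hfix : g^[j] p = p := Function.iterate_fixed hgp j
      have hgc : ContinuousAt g (g^[j] p) := by
        rw [hfix]; exact hgat.continuousAt
      exact hgc.comp ih
  have hev2 : ∀ᶠ z in 𝓝 p, ∀ j ∈ Finset.range (m+1), g^[j] z ∈ U := by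
    rw [eventually_all_finset]
    intro j _
    apply (hcont j).eventually_mem
    rw [Function.iterate_fixed hgp j]
    exact hUopen.mem_nhds hpU
  obtain ⟨δ₄, hδ₄pos, hδ₄⟩ := Metric.eventually_nhds_iff.1 hev2
  set δ : ℝ := min δ₂ (min δ₄ 1) with hδ
  have hδpos : 0 < δ := lt_min hδ₂pos (lt_min hδ₄pos one_pos)
  have hδle2 : δ ≤ δ₂ := min_le_left _ _
  have hδle4 : δ ≤ δ₄ := le_trans (min_le_right _ _) (min_le_left _ _)
  have hδle1 : δ ≤ 1 := le_trans (min_le_right _ _) (min_le_right _ _)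
  -- contraction and invariance on ball p δ
  have hcontr : ∀ z, dist z p < δ → ‖g^[m] z - p‖ ≤ c * ‖z - p‖ :=
    fun z hz => hδ₂ (lt_of_lt_of_le hz hδle2)
  have hUmem : ∀ z, dist z p < δ → ∀ j ≤ m, g^[j] z ∈ U := by
    intro z hz j hj
    exact hδ₄ (lt_of_lt_of_le hz hδle4) j (Finset.mem_range.2 (Nat.lt_succ_of_le hj))
  -- the starting point
  set w₀ : E := ((1 - δ/2 : ℝ) : ℂ) • p with hw₀
  have hw₀norm : ‖w₀‖ = 1 - δ/2 := by
    rw [hw₀, norm_smul, Complex.norm_real, Real.norm_eq_abs, hp, mul_one,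
      _root_.abs_of_nonneg (by linarith)]
  have hw₀ball : w₀ ∈ ball (0:E) 1 := by
    rw [mem_ball_zero_iff, hw₀norm]; linarith
  have hw₀dist : ‖w₀ - p‖ = δ/2 := by
    have : w₀ - p = ((-(δ/2) : ℝ) : ℂ) • p := by
      rw [hw₀]
      have : ((1 - δ/2 : ℝ) : ℂ) = 1 - ((δ/2 : ℝ) : ℂ) := by push_cast; ring
      rw [this, sub_smul, one_smul]
      push_cast
      module
    rw [this, norm_smul, Complex.norm_real, Real.norm_eq_abs, hp, mul_one, abs_neg,
      _root_.abs_of_nonneg (by linarith)]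
  -- the key induction: f and g iterates agree and stay in the good region
  have hkey : ∀ k : ℕ, f^[k*m] w₀ = (g^[m])^[k] w₀ ∧ f^[k*m] w₀ ∈ ball (0:E) 1 ∧
      ‖f^[k*m] w₀ - p‖ ≤ c ^ k * (δ/2) := by
    intro k
    induction k with
    | zero =>
      refine ⟨by simp, by simpa using hw₀ball, ?_⟩
      simp only [Nat.zero_eq, zero_mul, Function.iterate_zero, id_eq, pow_zero, one_mul]
      rw [hw₀dist]
    | succ k ih =>
      obtain ⟨ihe, ihball, ihdist⟩ := ih
      have hdistlt : ‖f^[k*m] w₀ - p‖ < δ := by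
        have hck : c ^ k ≤ 1 := pow_le_one₀ hc0 (le_of_lt hc1)
        have : c ^ k * (δ/2) ≤ δ/2 := by nlinarith
        linarith [ihdist]
      -- one step of m iterations: f agrees with g along the way
      have hstep : ∀ j ≤ m, f^[j] (f^[k*m] w₀) = g^[j] (f^[k*m] w₀) ∧
          f^[j] (f^[k*m] w₀) ∈ ball (0:E) 1 := by
        intro j hj
        induction j with
        | zero => exact ⟨rfl, ihball⟩
        | succ j ihj =>
          obtain ⟨ihje, ihjb⟩ := ihj (le_trans (Nat.le_succ j) hj)
          have hjU : g^[j] (f^[k*m] w₀) ∈ U := by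
            apply hUmem _ _ j (le_trans (Nat.le_succ j) hj)
            rw [dist_eq_norm]; exact hdistlt
          constructor
          · rw [Function.iterate_succ_apply', Function.iterate_succ_apply', ihje]
            exact hfg ⟨by rw [← ihje]; exact ihjb, hjU⟩
          · rw [Function.iterate_succ_apply']
            exact hfself ihjb
      have hme := (hstep m le_rfl).1
      have hmb := (hstep m le_rfl).2
      have he : f^[(k+1)*m] w₀ = (g^[m])^[k+1] w₀ := by
        have h1 : (k+1)*m = m + k*m := by ring
        rw [h1, Function.iterate_add_apply, hme, Function.iterate_succ_apply', ihe]
      refine ⟨he, ?_, ?_⟩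
      · have h1 : (k+1)*m = m + k*m := by ring
        rw [h1, Function.iterate_add_apply]
        exact hmb
      · have h1 : (k+1)*m = m + k*m := by ring
        rw [h1, Function.iterate_add_apply]
        have : f^[m] (f^[k*m] w₀) = g^[m] (f^[k*m] w₀) := hme
        rw [this]
        have := hcontr (f^[k*m] w₀) (by rw [dist_eq_norm]; exact hdistlt)
        calc ‖g^[m] (f^[k*m] w₀) - p‖ ≤ c * ‖f^[k*m] w₀ - p‖ := this
          _ ≤ c * (c ^ k * (δ/2)) := by
            apply mul_le_mul_of_nonneg_left ihdist hc0
          _ = c ^ (k+1) * (δ/2) := by ring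
  refine ⟨w₀, hw₀ball, ?_⟩
  rw [tendsto_iff_norm_sub_tendsto_zero]
  apply squeeze_zero (fun k => norm_nonneg _) (fun k => (hkey k).2.2)
  have : Tendsto (fun k : ℕ => c ^ k) atTop (𝓝 0) :=
    tendsto_pow_atTop_nhds_zero_of_lt_one hc0 hc1
  simpa using this.mul_const (δ/2)

end Aux

set_option maxHeartbeats 1000000 in
/-- **Attracting boundary fixed point on the ball.**  Let `f : 𝔹ⁿ → 𝔹ⁿ` be
holomorphic, holomorphic at `p ∈ ∂𝔹ⁿ` with `f(p) = p`.  If every eigenvalue of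
`J_f(p)` has modulus `< 1`, then there is `k₀ ∈ ℕ` such that the iterates
`f^{k k₀}` converge locally uniformly on `𝔹ⁿ` to the constant map `p`. -/
theorem ball_attracting_boundary_fixed_point
    {n : ℕ} (hn : 1 ≤ n)
    -- `f` is a holomorphic self-map of the unit ball `𝔹ⁿ`
    (f : EuclideanSpace ℂ (Fin n) → EuclideanSpace ℂ (Fin n))
    (hf : DifferentiableOn ℂ f (Metric.ball 0 1))
    (hfself : MapsTo f (Metric.ball 0 1) (Metric.ball 0 1))
    -- `f` is holomorphic at `p ∈ ∂𝔹ⁿ`: it extends holomorphically as `g` near `p`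
    (p : EuclideanSpace ℂ (Fin n)) (hp : ‖p‖ = 1)
    (g : EuclideanSpace ℂ (Fin n) → EuclideanSpace ℂ (Fin n))
    (U : Set (EuclideanSpace ℂ (Fin n))) (hUopen : IsOpen U) (hpU : p ∈ U)
    (hg : DifferentiableOn ℂ g U) (hfg : EqOn f g (Metric.ball 0 1 ∩ U))
    (hgp : g p = p)
    -- all eigenvalues of `J_f(p)` have modulus strictly less than one
    (heig : ∀ μ : ℂ,
      Module.End.HasEigenvalue
        ((fderiv ℂ g p : EuclideanSpace ℂ (Fin n) →L[ℂ] EuclideanSpace ℂ (Fin n)) :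
          EuclideanSpace ℂ (Fin n) →ₗ[ℂ] EuclideanSpace ℂ (Fin n)) μ → ‖μ‖ < 1) :
    ∃ k₀ : ℕ, TendstoLocallyUniformlyOn (fun k : ℕ => f^[k * k₀])
      (fun _ => p) atTop (Metric.ball 0 1) := by
  classical
  obtain ⟨m, hm1, hAm⟩ := exists_pow_norm_lt_one hn (fderiv ℂ g p) heig
  obtain ⟨w₀, hw₀ball, hw₀conv⟩ :=
    exists_attracted_point f g U hUopen hfself hp hpU hg hfg hgp m hAm
  refine ⟨m, ?_⟩
  rw [tendstoLocallyUniformlyOn_iff_forall_isCompact isOpen_ball]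
  intro K hKs hK
  rcases K.eq_empty_or_nonempty with rfl | hKne
  · exact tendstoUniformlyOn_empty
  obtain ⟨z₀, hz₀K, hmaxK'⟩ := hK.exists_isMaxOn hKne continuous_norm.continuousOn
  have hmaxK : ∀ y ∈ K, ‖y‖ ≤ ‖z₀‖ := fun y hy => hmaxK' hy
  set r : ℝ := max ‖z₀‖ ‖w₀‖ with hrdef
  have hr1 : r < 1 := max_lt (mem_ball_zero_iff.1 (hKs hz₀K)) (mem_ball_zero_iff.1 hw₀ball)
  have hr0 : 0 ≤ r := le_trans (norm_nonneg z₀) (le_max_left _ _)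
  set N : ℕ := ⌈(8:ℝ)/(1-r)⌉₊ with hNdef
  have h1r : (0:ℝ) < 1 - r := by linarith
  have hN : (2:ℝ) ≤ N * ((1-r)/4) := by
    have h8 : (8:ℝ)/(1-r) ≤ N := Nat.le_ceil _
    calc (2:ℝ) = (8/(1-r)) * ((1-r)/4) := by field_simp; norm_num
      _ ≤ N * ((1-r)/4) := mul_le_mul_of_nonneg_right h8 (by positivity)
  set C : ℝ := 3 ^ N * 3 with hCdef
  have hC : 0 < C := by positivity
  rw [Metric.tendstoUniformlyOn_iff]
  intro ε hε
  have hconv : Tendsto (fun k => (innerSL ℂ p) (f^[k*m] w₀)) atTop (𝓝 1) := by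
    have h1 := ((innerSL ℂ p).continuous.tendsto p).comp hw₀conv
    have h2 : (innerSL ℂ p) p = 1 := by
      rw [innerSL_apply_apply, inner_self_eq_norm_sq_to_K, hp]
      norm_num
    rwa [h2] at h1
  have hzero : Tendsto (fun k => ‖1 - (innerSL ℂ p) (f^[k*m] w₀)‖) atTop (𝓝 0) := by
    have := tendsto_iff_norm_sub_tendsto_zero.1 hconv
    simpa [norm_sub_rev] using this
  have hsmall : ∀ᶠ k in atTop, ‖1 - (innerSL ℂ p) (f^[k*m] w₀)‖ < ε^2 / (2*C) :=
    hzero.eventually_lt_const (by positivity)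
  filter_upwards [hsmall] with k hk
  intro z hzK
  have hzball : z ∈ ball (0 : EuclideanSpace ℂ (Fin n)) 1 := hKs hzK
  have hFd : DifferentiableOn ℂ (f^[k*m]) (ball 0 1) := iter_diffOn hf hfself (k*m)
  have hFm : MapsTo (f^[k*m]) (ball (0 : EuclideanSpace ℂ (Fin n)) 1) (ball 0 1) :=
    hfself.iterate (k*m)
  obtain ⟨hqd, hqm, hqb⟩ := qprop hFd hFm hp
  obtain ⟨hbz1, _⟩ := hqb z hzball
  obtain ⟨_, hbw2⟩ := hqb w₀ hw₀ball
  have hzr : ‖z‖ ≤ r := le_trans (hmaxK z hzK) (le_max_left _ _)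
  have hwr : ‖w₀‖ ≤ r := le_max_right _ _
  have hzw : ‖z - w₀‖ ≤ N * ((1-r)/4) := by
    calc ‖z - w₀‖ ≤ ‖z‖ + ‖w₀‖ := norm_sub_le _ _
      _ ≤ 2 := by linarith [lt_of_le_of_lt hzr hr1, lt_of_le_of_lt hwr hr1]
      _ ≤ N * ((1-r)/4) := hN
  have hchain := harnack_chain hqd hqm hr1 N z w₀ hzr hwr hzw
  -- combine the bounds
  have hkey : ‖1 - (innerSL ℂ p) (f^[k*m] z)‖ ≤ C * ‖1 - (innerSL ℂ p) (f^[k*m] w₀)‖ := by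
    calc ‖1 - (innerSL ℂ p) (f^[k*m] z)‖
        ≤ (3/2) * ‖1 + -((innerSL ℂ p) (f^[k*m] z)) / (2 - (innerSL ℂ p) (f^[k*m] z))‖ := hbz1
      _ ≤ (3/2) * (3 ^ N * ‖1 + -((innerSL ℂ p) (f^[k*m] w₀)) /
            (2 - (innerSL ℂ p) (f^[k*m] w₀))‖) := by linarith
      _ ≤ (3/2) * (3 ^ N * (2 * ‖1 - (innerSL ℂ p) (f^[k*m] w₀)‖)) := by
          have h3N : (0:ℝ) < 3 ^ N := by positivity
          nlinarith
      _ = C * ‖1 - (innerSL ℂ p) (f^[k*m] w₀)‖ := by rw [hCdef]; ring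
  have hfinal : ‖1 - (innerSL ℂ p) (f^[k*m] z)‖ < ε^2/2 := by
    have h2 : C * ‖1 - (innerSL ℂ p) (f^[k*m] w₀)‖ < C * (ε^2/(2*C)) :=
      mul_lt_mul_of_pos_left hk hC
    have h3 : C * (ε^2/(2*C)) = ε^2/2 := by field_simp
    linarith [hkey, h2, h3 ▸ h2]
  -- convert to a distance bound
  have hx : f^[k*m] z ∈ ball (0 : EuclideanSpace ℂ (Fin n)) 1 := hFm hzball
  have hxn : ‖f^[k*m] z‖ < 1 := mem_ball_zero_iff.1 hx
  have hsq : ‖p - f^[k*m] z‖^2 ≤ 2 * ‖1 - (innerSL ℂ p) (f^[k*m] z)‖ := by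
    have hns := norm_sub_sq (𝕜 := ℂ) p (f^[k*m] z)
    have hre : 1 - RCLike.re (inner (𝕜 := ℂ) p (f^[k*m] z)) ≤
        ‖1 - (innerSL ℂ p) (f^[k*m] z)‖ := by
      have := Complex.re_le_norm (1 - (innerSL ℂ p) (f^[k*m] z))
      simpa [innerSL_apply_apply] using this
    have h1 : ‖p‖^2 = 1 := by rw [hp]; norm_num
    have h2 : ‖f^[k*m] z‖^2 ≤ 1 := by nlinarith [norm_nonneg (f^[k*m] z)]
    rw [hns, h1]
    linarith [hre]
  rw [dist_eq_norm]
  nlinarith [norm_nonneg (p - f^[k*m] z), hsq, hfinal, hε]
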